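/- Let ψ : ℤ^m → M ≅ ℤ^d be a surjective lattice homomorphism, ψ(e_j) = α_j, and let n_1, …, n_p ∈ ℤ^m generate ker ψ, with relation matrix R ∈ ℤ^{p×m} whose i-th row is n_i. Suppose the submatrix of R formed by some m−d of the rows has rank m−d. Then for any indices 1 ≤ j_1 < ⋯ < j_d ≤ m, the wedge α_{j_1} ∧ ⋯ ∧ α_{j_d} vanishes in Λ^d(M ⊗ ℚ) if and only if the (m−d)×(m−d) minor of that submatrix obtained by deleting columns j_1, …, j_d vanishes. -/

import Mathlib

/-- Lemma on Grassmann / Plücker coordinates: with ψ : ℤ^m → ℤ^d surjective,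
ψ(e_j) = α_j, relation vectors n_1,…,n_p generating ker ψ, and a choice of
m−d rows of the relation matrix of rank m−d, the wedge
α_{j_1} ∧ ⋯ ∧ α_{j_d} vanishes (i.e. the determinant of the matrix of the
α_{j_l} over ℚ vanishes) iff the (m−d)×(m−d) minor of the chosen rows on the
complementary columns vanishes. -/
theorem stmt4 (d m p : ℕ) (hdm : d ≤ m)
    (α : Fin m → (Fin d → ℤ))
    (hsurj : Submodule.span ℤ (Set.range α) = (⊤ : Submodule ℤ (Fin d → ℤ)))
    (N : Fin p → (Fin m → ℤ))
    (hker : ∀ x : Fin m → ℤ,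
      (∑ j, x j • α j = 0) ↔ x ∈ Submodule.span ℤ (Set.range N))
    (r : Fin (m - d) → Fin p) (hr : Function.Injective r)
    (hrank : Matrix.rank (Matrix.of fun s t => ((N (r s) t : ℚ))) = m - d)
    (j : Fin d → Fin m) (hj : StrictMono j)
    (jc : Fin (m - d) → Fin m) (hjc : StrictMono jc)
    (hcompl : Set.range j ∪ Set.range jc = Set.univ)
    (hdisj : Disjoint (Set.range j) (Set.range jc)) :
    Matrix.det (Matrix.of fun l i : Fin d => (α (j l) i : ℚ)) = 0 ↔
      Matrix.det (Matrix.of fun s t : Fin (m - d) => (N (r s) (jc t) : ℚ)) = 0 := by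
  classical
  -- rational versions of the data
  set αq : Fin m → (Fin d → ℚ) := fun t k => (α t k : ℚ) with hαq
  set Bv : Fin (m - d) → (Fin m → ℚ) := fun s t => (N (r s) t : ℚ) with hBv
  -- the relations hold over ℚ
  have hrel : ∀ i : Fin p, ∀ k : Fin d, ∑ t, (α t k : ℚ) * (N i t : ℚ) = 0 := by
    intro i k
    have h0 : ∑ t, N i t • α t = 0 := (hker (N i)).mpr (Submodule.subset_span ⟨i, rfl⟩)
    have h1 : ∑ t, N i t * α t k = 0 := by
      have := congrFun h0 k
      simpa [Finset.sum_apply] using this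
    have h2 := congrArg (Int.cast : ℤ → ℚ) h1
    push_cast at h2
    simpa [mul_comm] using h2
  -- the αq span ℚ^d
  have hcast : ∀ w : Fin d → ℤ,
      (fun k => (w k : ℚ)) ∈ Submodule.span ℚ (Set.range αq) := by
    intro w
    have hw : w ∈ Submodule.span ℤ (Set.range α) := hsurj ▸ Submodule.mem_top
    induction hw using Submodule.span_induction with
    | mem v hv =>
      obtain ⟨t, rfl⟩ := hv
      exact Submodule.subset_span ⟨t, rfl⟩
    | zero =>
      have : (fun k => ((0 : Fin d → ℤ) k : ℚ)) = (0 : Fin d → ℚ) := by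
        funext k; simp
      rw [this]; exact Submodule.zero_mem _
    | add a b _ _ ha hb =>
      have : (fun k => ((a + b) k : ℚ)) =
          (fun k => (a k : ℚ)) + fun k => (b k : ℚ) := by
        funext k; simp
      rw [this]; exact Submodule.add_mem _ ha hb
    | smul z a _ ha =>
      have : (fun k => ((z • a) k : ℚ)) = (z : ℚ) • fun k => (a k : ℚ) := by
        funext k; simp
      rw [this]; exact Submodule.smul_mem _ _ ha
  have hspanQ : Submodule.span ℚ (Set.range αq) = ⊤ := by
    rw [Submodule.eq_top_iff']
    intro v
    have hv : v = ∑ k, v k • (fun k' => ((Pi.single k 1 : Fin d → ℤ) k' : ℚ)) := by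
      funext k'
      simp [Finset.sum_apply, Pi.single_apply, eq_comm]
    rw [hv]
    exact Submodule.sum_mem _ fun k _ => Submodule.smul_mem _ _ (hcast _)
  -- the linear map f : ℚ^m → ℚ^d given by x ↦ ∑ x t • αq t
  set Am : Matrix (Fin d) (Fin m) ℚ := Matrix.of fun k t => (α t k : ℚ) with hAm
  set f := Am.mulVecLin with hf
  have hfapply : ∀ x : Fin m → ℚ, ∀ k, f x k = ∑ t, (α t k : ℚ) * x t := by
    intro x k
    simp [hf, Matrix.mulVecLin_apply, Matrix.mulVec, dotProduct, hAm]
  have hfrange : LinearMap.range f = ⊤ := by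
    rw [hf, Matrix.range_mulVecLin]
    have : Am.col = αq := by funext t k; rfl
    rw [this, hspanQ]
  have hd : Module.finrank ℚ (Fin d → ℚ) = d := by simp
  have hm : Module.finrank ℚ (Fin m → ℚ) = m := by simp
  have hkerdim : Module.finrank ℚ (LinearMap.ker f) = m - d := by
    have h := f.finrank_range_add_finrank_ker
    rw [hfrange, finrank_top, hd, hm] at h
    omega
  -- the span of the chosen relation rows
  set W := Submodule.span ℚ (Set.range Bv) with hW
  have hWdim : Module.finrank ℚ W = m - d := by
    have h := (Matrix.of fun s t => ((N (r s) t : ℚ))).rank_eq_finrank_span_row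
    rw [hrank] at h
    exact h.symm
  have hWle : W ≤ LinearMap.ker f := by
    rw [hW, Submodule.span_le]
    rintro v ⟨s, rfl⟩
    simp only [SetLike.mem_coe, LinearMap.mem_ker]
    funext k
    simpa [hfapply] using hrel (r s) k
  have hWeq : W = LinearMap.ker f :=
    Submodule.eq_of_le_of_finrank_eq hWle (by rw [hWdim, hkerdim])
  have hindep : LinearIndependent ℚ Bv := by
    rw [linearIndependent_iff_card_eq_finrank_span]
    rw [Fintype.card_fin, Set.finrank, ← hW, hWdim]
  -- the index equivalence
  have hinj : Function.Injective (Sum.elim j jc) := by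
    rintro (a | a) (b | b) hab
    · exact congrArg Sum.inl (hj.injective hab)
    · exact absurd ⟨b, hab.symm⟩ (Set.disjoint_left.mp hdisj ⟨a, rfl⟩)
    · exact absurd ⟨b, hab.symm⟩ (Set.disjoint_right.mp hdisj ⟨a, rfl⟩)
    · exact congrArg Sum.inr (hjc.injective hab)
  have hsurjE : Function.Surjective (Sum.elim j jc) := by
    intro t
    have ht : t ∈ Set.range j ∪ Set.range jc := hcompl ▸ Set.mem_univ t
    rcases ht with ⟨l, hl⟩ | ⟨s, hs⟩
    exacts [⟨Sum.inl l, hl⟩, ⟨Sum.inr s, hs⟩]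
  set e : (Fin d ⊕ Fin (m - d)) ≃ Fin m := Equiv.ofBijective _ ⟨hinj, hsurjE⟩ with he
  have hel : ∀ l, e (Sum.inl l) = j l := fun l => rfl
  have her : ∀ s, e (Sum.inr s) = jc s := fun s => rfl
  have hsum : ∀ (g : Fin m → ℚ), ∑ t, g t = ∑ l, g (j l) + ∑ s, g (jc s) := by
    intro g
    rw [← Equiv.sum_comp e g, Fintype.sum_sum_type]
    simp only [hel, her]
  constructor
  · -- forward direction
    intro hdet
    obtain ⟨c, hc0, hcv⟩ := Matrix.exists_vecMul_eq_zero_iff.mpr hdet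
    set x : Fin m → ℚ := fun t => Sum.elim c 0 (e.symm t) with hx
    have hxj : ∀ l, x (j l) = c l := by
      intro l
      have : e.symm (j l) = Sum.inl l := by
        rw [← hel l, Equiv.symm_apply_apply]
      simp [hx, this]
    have hxjc : ∀ s, x (jc s) = 0 := by
      intro s
      have : e.symm (jc s) = Sum.inr s := by
        rw [← her s, Equiv.symm_apply_apply]
      simp [hx, this]
    have hxker : f x = 0 := by
      funext k
      rw [hfapply, hsum (fun t => (α t k : ℚ) * x t)]
      have h1 : ∑ l, (α (j l) k : ℚ) * x (j l) = 0 := by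
        have h2 := congrFun hcv k
        simp only [Matrix.vecMul, dotProduct, Matrix.of_apply, Pi.zero_apply] at h2
        calc ∑ l, (α (j l) k : ℚ) * x (j l) = ∑ l, c l * (α (j l) k : ℚ) := by
              simp [hxj, mul_comm]
          _ = 0 := h2
      simp [hxjc, h1]
    have hxW : x ∈ W := by rw [hWeq]; exact LinearMap.mem_ker.mpr hxker
    rw [hW] at hxW
    obtain ⟨y, hy⟩ := Submodule.mem_span_range_iff_exists_fun ℚ |>.mp hxW
    have hy0 : y ≠ 0 := by
      rintro rfl
      have hx0 : x = 0 := by simpa using hy.symm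
      obtain ⟨l, hl⟩ := Function.ne_iff.mp hc0
      exact hl (by rw [← hxj l, hx0]; rfl)
    apply Matrix.exists_vecMul_eq_zero_iff.mp
    refine ⟨y, hy0, ?_⟩
    funext t
    have h3 : (Matrix.vecMul y <| Matrix.of fun s t : Fin (m - d) => (N (r s) (jc t) : ℚ)) t
        = x (jc t) := by
      rw [← hy]
      simp [Matrix.vecMul, dotProduct, Finset.sum_apply, hBv]
    rw [h3, hxjc]
    rfl
  · -- backward direction
    intro hdet
    obtain ⟨y, hy0, hyv⟩ := Matrix.exists_vecMul_eq_zero_iff.mpr hdet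
    set x : Fin m → ℚ := fun t => ∑ s, y s * Bv s t with hx
    have hxsum : ∑ s, y s • Bv s = x := by
      funext t; simp [hx, Finset.sum_apply]
    have hxW : x ∈ W := by
      rw [← hxsum]
      exact Submodule.sum_mem _ fun s _ =>
        Submodule.smul_mem _ _ (Submodule.subset_span ⟨s, rfl⟩)
    have hxker : f x = 0 := LinearMap.mem_ker.mp (hWle hxW)
    have hxjc : ∀ t, x (jc t) = 0 := by
      intro t
      have h2 := congrFun hyv t
      simp only [Matrix.vecMul, dotProduct, Matrix.of_apply, Pi.zero_apply] at h2
      simpa [hx, hBv] using h2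
    have hx0 : x ≠ 0 := by
      intro h
      apply hy0
      funext s
      exact Fintype.linearIndependent_iff.mp hindep y (by rw [hxsum, h]) s
    set c : Fin d → ℚ := fun l => x (j l) with hc
    have hc0 : c ≠ 0 := by
      intro h
      apply hx0
      funext t
      obtain ⟨u, rfl⟩ := hsurjE t
      cases u with
      | inl l =>
        have := congrFun h l
        simpa [hc] using this
      | inr s => simpa using hxjc s
    apply Matrix.exists_vecMul_eq_zero_iff.mp
    refine ⟨c, hc0, ?_⟩
    funext i
    have h4 : (Matrix.vecMul c <| Matrix.of fun l i : Fin d => (α (j l) i : ℚ)) i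
        = ∑ t, (α t i : ℚ) * x t := by
      rw [hsum (fun t => (α t i : ℚ) * x t)]
      simp [Matrix.vecMul, dotProduct, hc, hxjc, mul_comm]
    rw [h4, ← hfapply, hxker]
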